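/- Let f : ℝ → ℝ be a differentiable positive function on ℝ. Then f satisfies f(a+c)*f(b) ≥ f(b+c)*f(a) for all a ≤ b and c ≥ 0 if and only if the derivative of log f (i.e., f'/f) is non-increasing on ℝ. -/

import Mathlib

/-- For a differentiable, everywhere-positive function, the ratio condition is
equivalent to the derivative of `log f` being non-increasing. -/
theorem differentiable_ratio_iff_logDeriv_antitone
    (f : ℝ → ℝ) (hf : ∀ y, 0 < f y) (hdiff : Differentiable ℝ f) :
    (∀ a b c : ℝ, a ≤ b → 0 ≤ c →
        f (b + c) * f a ≤ f (a + c) * f b) ↔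
      Antitone (deriv fun x => Real.log (f x)) := by
  set g : ℝ → ℝ := fun x => Real.log (f x) with hg_def
  have hg : Differentiable ℝ g := hdiff.log (fun x => (hf x).ne')
  -- derivative of translated g
  have key : ∀ (a : ℝ) (x : ℝ), HasDerivAt (fun c => g (a + c)) (deriv g (a + x)) x := by
    intro a x
    have h1 : HasDerivAt (fun c : ℝ => a + c) 1 x := by
      simpa using (hasDerivAt_id x).const_add a
    have h2 := (hg (a + x)).hasDerivAt
    have h3 := h2.comp x h1
    rw [mul_one] at h3
    exact h3
  constructor
  · intro H a b hab
    -- show deriv g b ≤ deriv g a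
    set h : ℝ → ℝ := fun c => g (a + c) - g (b + c) with hh_def
    have hmono : ∀ c, 0 ≤ c → h 0 ≤ h c := by
      intro c hc
      have := H a b c hab hc
      have hlog : Real.log (f (b + c) * f a) ≤ Real.log (f (a + c) * f b) :=
        Real.log_le_log (mul_pos (hf _) (hf _)) this
      rw [Real.log_mul (hf _).ne' (hf _).ne', Real.log_mul (hf _).ne' (hf _).ne'] at hlog
      simp only [hh_def, hg_def, add_zero]
      linarith
    have hd : HasDerivAt h (deriv g a - deriv g b) 0 := by
      have := (key a 0).sub (key b 0)
      simp only [add_zero] at this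
      exact this
    have htend := hasDerivAt_iff_tendsto_slope.mp hd
    have htend' : Filter.Tendsto (slope h 0) (nhdsWithin 0 (Set.Ioi 0))
        (nhds (deriv g a - deriv g b)) :=
      htend.mono_left (nhdsWithin_mono _ (fun x hx => ne_of_gt hx))
    have hnn : ∀ᶠ c in nhdsWithin (0:ℝ) (Set.Ioi 0), 0 ≤ slope h 0 c := by
      filter_upwards [self_mem_nhdsWithin] with c hc
      have hc' : (0:ℝ) < c := hc
      have := hmono c hc'.le
      rw [slope_def_field]
      have : 0 ≤ h c - h 0 := by linarith
      have := div_nonneg this hc'.le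
      simpa [div_eq_inv_mul, sub_zero] using this
    have : 0 ≤ deriv g a - deriv g b :=
      ge_of_tendsto htend' hnn
    linarith
  · intro H a b c hab hc
    set ψ : ℝ → ℝ := fun x => g (a + x) - g (b + x) with hψ_def
    have hψd : ∀ x, HasDerivAt ψ (deriv g (a + x) - deriv g (b + x)) x :=
      fun x => (key a x).sub (key b x)
    have hψmono : Monotone ψ := by
      apply monotone_of_deriv_nonneg
      · exact fun x => ((hψd x).differentiableAt)
      · intro x
        rw [(hψd x).deriv]
        have : a + x ≤ b + x := by linarith
        linarith [H this]
    have := hψmono hc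
    have hlog : Real.log (f (b + c)) + Real.log (f a)
        ≤ Real.log (f (a + c)) + Real.log (f b) := by
      simp only [hψ_def, hg_def] at this
      have h0 : g (a + 0) - g (b + 0) = Real.log (f a) - Real.log (f b) := by
        simp [hg_def]
      simp only [add_zero] at this ⊢
      linarith [this]
    have : Real.log (f (b + c) * f a) ≤ Real.log (f (a + c) * f b) := by
      rw [Real.log_mul (hf _).ne' (hf _).ne', Real.log_mul (hf _).ne' (hf _).ne']
      exact hlog
    exact (Real.log_le_log_iff (mul_pos (hf _) (hf _)) (mul_pos (hf _) (hf _))).mp this
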